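/- arXiv:2605.28274 — 4 statements merged into one kernel-verified Lean document; each statement's English description precedes it below -/
import Mathlib

section
/- Let A be an n×n real matrix, B an m×m real matrix, C1 an n×s real matrix and C2 an m×s real matrix. Let F := I_m ⊗ A + Bᵀ ⊗ I_n (an mn×mn matrix) and c := vec(C1 C2ᵀ) ∈ ℝ^{mn}. Then for every k ≥ 1, the Krylov subspace K_k(F,c) := span(c, Fc, F²c, …, F^{k-1}c) is contained in the Kronecker product of subspaces K_k^□(Bᵀ,C2) ⊗ K_k^□(A,C1) := span{ w ⊗ v : v ∈ K_k^□(A,C1), w ∈ K_k^□(Bᵀ,C2) }. -/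
open Matrix Kronecker

noncomputable section

/-- `vec X` stacks the columns of `X` on top of each other; the entry of `vec X`
indexed by `(j, i)` (column `j`, row `i`) is `X i j`. -/
def vec {n m : ℕ} (X : Matrix (Fin n) (Fin m) ℝ) : Fin m × Fin n → ℝ :=
  fun p => X p.2 p.1

/-- Kronecker product of two vectors, viewed as one-column matrices. -/
def vecKron {m n : ℕ} (w : Fin m → ℝ) (v : Fin n → ℝ) : Fin m × Fin n → ℝ :=
  fun p => w p.1 * v p.2

/-- The Krylov subspace `K_k(F, c) = span(c, Fc, …, F^{k-1}c)`. -/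
def krylov {N : Type*} [Fintype N] [DecidableEq N] (F : Matrix N N ℝ) (c : N → ℝ) (k : ℕ) :
    Submodule ℝ (N → ℝ) :=
  Submodule.span ℝ (Set.range fun i : Fin k => (F ^ (i : ℕ)) *ᵥ c)

/-- The block Krylov matrix `[C, AC, A²C, …, A^{k-1}C]`. -/
def krylovMat {n s : ℕ} (A : Matrix (Fin n) (Fin n) ℝ) (C : Matrix (Fin n) (Fin s) ℝ) (k : ℕ) :
    Matrix (Fin n) (Fin k × Fin s) ℝ :=
  Matrix.of fun i p => (A ^ (p.1 : ℕ) * C) i p.2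

/-- The block Krylov subspace `K_k^□(A, C)`: the range (column space) of
`[C, AC, …, A^{k-1}C]`. -/
def blockKrylov {n s : ℕ} (A : Matrix (Fin n) (Fin n) ℝ) (C : Matrix (Fin n) (Fin s) ℝ) (k : ℕ) :
    Submodule ℝ (Fin n → ℝ) :=
  LinearMap.range (krylovMat A C k).mulVecLin

-- column of A^j * C is in blockKrylov
lemma col_mem {n s : ℕ} (A : Matrix (Fin n) (Fin n) ℝ) (C : Matrix (Fin n) (Fin s) ℝ)
    (k j : ℕ) (hj : j < k) (t : Fin s) :
    (fun i => (A ^ j * C) i t) ∈ blockKrylov A C k := by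
  refine ⟨Pi.single (⟨j, hj⟩, t) 1, ?_⟩
  funext i
  simp [krylovMat, mulVec, Pi.single_apply, mul_ite, Finset.sum_ite_eq']

lemma F_mulVec_vec {n m : ℕ} (A : Matrix (Fin n) (Fin n) ℝ) (B : Matrix (Fin m) (Fin m) ℝ)
    (X : Matrix (Fin n) (Fin m) ℝ) :
    ((1 : Matrix (Fin m) (Fin m) ℝ) ⊗ₖ A + Bᵀ ⊗ₖ (1 : Matrix (Fin n) (Fin n) ℝ)) *ᵥ _root_.vec X
      = _root_.vec (A * X + X * B) := by
  funext p
  obtain ⟨q, i⟩ := p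
  simp only [Matrix.add_mulVec, Pi.add_apply, mulVec, dotProduct, _root_.vec, Matrix.add_apply,
    kroneckerMap_apply, Matrix.one_apply, transpose_apply, Matrix.mul_apply,
    Fintype.sum_prod_type, ite_mul, zero_mul, one_mul]
  simp only [add_mul, mul_ite, ite_mul, zero_mul, mul_one, mul_zero,
    Finset.sum_add_distrib, Finset.sum_ite_eq, Finset.sum_ite_eq', Finset.mem_univ, if_pos]
  rw [Finset.sum_comm]
  simp [mul_comm]

-- base case: vec (A^j * C1 * C2ᵀ * B^l) is in the span
lemma base_mem (n m s : ℕ) (A : Matrix (Fin n) (Fin n) ℝ) (B : Matrix (Fin m) (Fin m) ℝ)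
    (C1 : Matrix (Fin n) (Fin s) ℝ) (C2 : Matrix (Fin m) (Fin s) ℝ) (k j l : ℕ)
    (hj : j < k) (hl : l < k) :
    _root_.vec (A ^ j * C1 * C2ᵀ * B ^ l) ∈
      Submodule.span ℝ
        {z : Fin m × Fin n → ℝ |
          ∃ v ∈ blockKrylov A C1 k, ∃ w ∈ blockKrylov Bᵀ C2 k, z = vecKron w v} := by
  have hvec : _root_.vec (A ^ j * C1 * C2ᵀ * B ^ l)
      = ∑ t : Fin s, vecKron (fun q => ((Bᵀ) ^ l * C2) q t) (fun i => (A ^ j * C1) i t) := by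
    funext p
    obtain ⟨q, i⟩ := p
    simp only [_root_.vec, vecKron, Finset.sum_apply]
    have : A ^ j * C1 * C2ᵀ * B ^ l = (A ^ j * C1) * ((Bᵀ) ^ l * C2)ᵀ := by
      rw [Matrix.transpose_mul, Matrix.transpose_pow, Matrix.transpose_transpose,
        Matrix.mul_assoc]
    rw [this, Matrix.mul_apply]
    simp [transpose_apply, mul_comm]
  rw [hvec]
  refine Submodule.sum_mem _ fun t _ => Submodule.subset_span ?_
  exact ⟨_, col_mem A C1 k j hj t, _, col_mem Bᵀ C2 k l hl t, rfl⟩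

lemma key_mem (n m s : ℕ) (A : Matrix (Fin n) (Fin n) ℝ) (B : Matrix (Fin m) (Fin m) ℝ)
    (C1 : Matrix (Fin n) (Fin s) ℝ) (C2 : Matrix (Fin m) (Fin s) ℝ) (k : ℕ) :
    ∀ p j l : ℕ, j + l + p < k →
    (((1 : Matrix (Fin m) (Fin m) ℝ) ⊗ₖ A + Bᵀ ⊗ₖ (1 : Matrix (Fin n) (Fin n) ℝ)) ^ p) *ᵥ
        _root_.vec (A ^ j * C1 * C2ᵀ * B ^ l) ∈
      Submodule.span ℝ
        {z : Fin m × Fin n → ℝ |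
          ∃ v ∈ blockKrylov A C1 k, ∃ w ∈ blockKrylov Bᵀ C2 k, z = vecKron w v} := by
  intro p
  induction p with
  | zero =>
    intro j l h
    simpa using base_mem n m s A B C1 C2 k j l (by omega) (by omega)
  | succ p ih =>
    intro j l h
    have hsplit : A * (A ^ j * C1 * C2ᵀ * B ^ l) + (A ^ j * C1 * C2ᵀ * B ^ l) * B
        = A ^ (j+1) * C1 * C2ᵀ * B ^ l + A ^ j * C1 * C2ᵀ * B ^ (l+1) := by
      rw [pow_succ', pow_succ]
      simp only [Matrix.mul_assoc]
    have hvadd : _root_.vec (A ^ (j+1) * C1 * C2ᵀ * B ^ l + A ^ j * C1 * C2ᵀ * B ^ (l+1))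
        = _root_.vec (A ^ (j+1) * C1 * C2ᵀ * B ^ l) + _root_.vec (A ^ j * C1 * C2ᵀ * B ^ (l+1)) := rfl
    rw [pow_succ, ← Matrix.mulVec_mulVec, F_mulVec_vec, hsplit, hvadd, Matrix.mulVec_add]
    exact Submodule.add_mem _ (ih (j+1) l (by omega)) (ih j (l+1) (by omega))

theorem stmt0 (n m s : ℕ) (A : Matrix (Fin n) (Fin n) ℝ) (B : Matrix (Fin m) (Fin m) ℝ)
    (C1 : Matrix (Fin n) (Fin s) ℝ) (C2 : Matrix (Fin m) (Fin s) ℝ) (k : ℕ) (hk : 1 ≤ k) :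
    krylov ((1 : Matrix (Fin m) (Fin m) ℝ) ⊗ₖ A + Bᵀ ⊗ₖ (1 : Matrix (Fin n) (Fin n) ℝ))
        (_root_.vec (C1 * C2ᵀ)) k ≤
      Submodule.span ℝ
        {z : Fin m × Fin n → ℝ |
          ∃ v ∈ blockKrylov A C1 k, ∃ w ∈ blockKrylov Bᵀ C2 k, z = vecKron w v} := by
  rw [krylov, Submodule.span_le]
  rintro _ ⟨i, rfl⟩
  have := key_mem n m s A B C1 C2 k i 0 0 (by omega)
  simpa using this
end
end

section
/- Let A ∈ ℝ^{n×n}, B ∈ ℝ^{m×m}, C1 ∈ ℝ^{n×s}, C2 ∈ ℝ^{m×s}, F := I_m ⊗ A + Bᵀ ⊗ I_n, and c := vec(C1 C2ᵀ). Let Z ∈ ℝ^{n×m} be such that vec(Z) ∈ K_k(F,c) := span(c, Fc, …, F^{k-1}c), say vec(Z) = Σ_{i=0}^{k-1} ρ_i F^i c with ρ_i ∈ ℝ. Then Z = [C1, AC1, …, A^{k-1}C1] · Ẑ · [C2, BᵀC2, …, (Bᵀ)^{k-1}C2]ᵀ, where Ẑ ∈ ℝ^{ks×ks} is the block matrix with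 k×k blocks of size s×s whose (i,j)-th block (1 ≤ i,j ≤ k) equals binom(i+j-2, i-1)·ρ_{i+j-2}·I_s if i+j ≤ k+1 and equals the s×s zero matrix if i+j > k+1. -/
open Matrix Kronecker

noncomputable section

/-- The `ks × ks` block upper anti-triangular matrix `Ẑ` whose `(i,j)`-th `s × s` block
(with `1 ≤ i, j ≤ k`, here indexed from `0`) is `binom(i+j-2, i-1)·ρ_{i+j-2}·I_s` if
`i + j ≤ k + 1` and the zero block otherwise. -/
def Zhat (k s : ℕ) (ρ : ℕ → ℝ) : Matrix (Fin k × Fin s) (Fin k × Fin s) ℝ :=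
  Matrix.of fun p q =>
    if (p.1 : ℕ) + 1 + ((q.1 : ℕ) + 1) ≤ k + 1 then
      (((p.1 : ℕ) + (q.1 : ℕ)).choose (p.1 : ℕ) : ℝ) * ρ ((p.1 : ℕ) + (q.1 : ℕ)) *
        (if p.2 = q.2 then 1 else 0)
    else 0

lemma vec_sum {n m : ℕ} {ι : Type*} (t : Finset ι) (f : ι → Matrix (Fin n) (Fin m) ℝ) :
    _root_.vec (∑ i ∈ t, f i) = ∑ i ∈ t, _root_.vec (f i) := by
  funext p
  simp [_root_.vec, Matrix.sum_apply]

lemma vec_inj {n m : ℕ} {X Y : Matrix (Fin n) (Fin m) ℝ} (h : _root_.vec X = _root_.vec Y) : X = Y := by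
  funext i j
  exact congrFun h (j, i)

lemma sum_mulVec' {α β : Type*} [Fintype β] {ι : Type*} (t : Finset ι) (f : ι → Matrix α β ℝ)
    (v : β → ℝ) : (∑ i ∈ t, f i) *ᵥ v = ∑ i ∈ t, (f i *ᵥ v) := by
  funext p
  simp [Matrix.mulVec, dotProduct, Matrix.sum_apply, Finset.sum_apply, Finset.sum_mul]
  rw [Finset.sum_comm]

lemma kron_mulVec {n m : ℕ} (M : Matrix (Fin m) (Fin m) ℝ) (N : Matrix (Fin n) (Fin n) ℝ)
    (X : Matrix (Fin n) (Fin m) ℝ) :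
    (M ⊗ₖ N) *ᵥ _root_.vec X = _root_.vec (N * X * Mᵀ) := by
  funext p
  obtain ⟨p1, p2⟩ := p
  simp only [_root_.vec, Matrix.mulVec, dotProduct, Matrix.mul_apply, Matrix.kronecker_apply,
    Fintype.sum_prod_type, Matrix.transpose_apply, Finset.sum_mul, Finset.mul_sum]
  apply Finset.sum_congr rfl
  intro r _
  apply Finset.sum_congr rfl
  intro t _
  ring

lemma one_kron_pow {n m : ℕ} (A : Matrix (Fin n) (Fin n) ℝ) (j : ℕ) :
    ((1 : Matrix (Fin m) (Fin m) ℝ) ⊗ₖ A) ^ j = (1 : Matrix (Fin m) (Fin m) ℝ) ⊗ₖ (A ^ j) := by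
  induction j with
  | zero => simp [Matrix.one_kronecker_one]
  | succ j ih => rw [pow_succ, ih, ← Matrix.mul_kronecker_mul, one_mul, ← pow_succ]

lemma kron_one_pow {n m : ℕ} (B : Matrix (Fin m) (Fin m) ℝ) (j : ℕ) :
    (B ⊗ₖ (1 : Matrix (Fin n) (Fin n) ℝ)) ^ j = (B ^ j) ⊗ₖ (1 : Matrix (Fin n) (Fin n) ℝ) := by
  induction j with
  | zero => simp [Matrix.one_kronecker_one]
  | succ j ih => rw [pow_succ, ih, ← Matrix.mul_kronecker_mul, one_mul, ← pow_succ]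

lemma key {n m : ℕ} (A : Matrix (Fin n) (Fin n) ℝ) (B : Matrix (Fin m) (Fin m) ℝ)
    (X : Matrix (Fin n) (Fin m) ℝ) (i : ℕ) :
    (((1 : Matrix (Fin m) (Fin m) ℝ) ⊗ₖ A + Bᵀ ⊗ₖ (1 : Matrix (Fin n) (Fin n) ℝ)) ^ i) *ᵥ _root_.vec X
      = _root_.vec (∑ j ∈ Finset.range (i + 1),
          ((i.choose j : ℝ)) • (A ^ j * X * B ^ (i - j))) := by
  have hc : Commute ((1 : Matrix (Fin m) (Fin m) ℝ) ⊗ₖ A)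
      (Bᵀ ⊗ₖ (1 : Matrix (Fin n) (Fin n) ℝ)) := by
    unfold Commute SemiconjBy
    rw [← Matrix.mul_kronecker_mul, ← Matrix.mul_kronecker_mul, one_mul, mul_one, one_mul, mul_one]
  rw [hc.add_pow, sum_mulVec', _root_.vec_sum]
  refine Finset.sum_congr rfl fun j hj => ?_
  rw [one_kron_pow, kron_one_pow, ← Matrix.mul_kronecker_mul, mul_one, one_mul]
  have hcast : ((Bᵀ ^ (i - j)) ⊗ₖ (A ^ j)) * ((i.choose j : ℕ) : Matrix (Fin m × Fin n) (Fin m × Fin n) ℝ)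
      = ((i.choose j : ℝ)) • ((Bᵀ ^ (i - j)) ⊗ₖ (A ^ j)) := by
    rw [← (Nat.cast_commute (i.choose j) _).eq, ← nsmul_eq_mul, ← Nat.cast_smul_eq_nsmul ℝ]
  rw [hcast, Matrix.smul_mulVec, kron_mulVec, Matrix.transpose_pow, Matrix.transpose_transpose]
  funext p
  simp [_root_.vec, Finset.sum_apply, Matrix.smul_apply]

lemma rhs_eq {n m s : ℕ} (A : Matrix (Fin n) (Fin n) ℝ) (B : Matrix (Fin m) (Fin m) ℝ)
    (C1 : Matrix (Fin n) (Fin s) ℝ) (C2 : Matrix (Fin m) (Fin s) ℝ) (k : ℕ) (ρ : ℕ → ℝ) :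
    krylovMat A C1 k * Zhat k s ρ * (krylovMat Bᵀ C2 k)ᵀ =
      ∑ a : Fin k, ∑ b : Fin k,
        (if (a : ℕ) + (b : ℕ) < k then
            ((((a : ℕ) + (b : ℕ)).choose (a : ℕ) : ℝ) * ρ ((a : ℕ) + (b : ℕ))) else 0) •
          (A ^ (a : ℕ) * (C1 * C2ᵀ) * B ^ (b : ℕ)) := by
  funext i j
  simp only [Matrix.mul_apply, Matrix.transpose_apply, krylovMat, Zhat, Matrix.of_apply,
    Fintype.sum_prod_type, Matrix.sum_apply, Matrix.smul_apply, smul_eq_mul]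
  simp only [mul_ite, ite_mul, mul_one, mul_zero, zero_mul, Finset.sum_ite_irrel,
    Finset.sum_const_zero, Finset.sum_ite_eq', Finset.mem_univ, if_true]
  simp only [Finset.sum_mul, ite_mul, zero_mul]
  conv_lhs => enter [2, b]; rw [Finset.sum_comm]
  simp only [Finset.sum_ite_irrel, Finset.sum_const_zero]
  rw [Finset.sum_comm]
  refine Finset.sum_congr rfl fun a _ => Finset.sum_congr rfl fun b _ => ?_
  have hiff : ((a : ℕ) + 1 + ((b : ℕ) + 1) ≤ k + 1) ↔ ((a : ℕ) + (b : ℕ) < k) := by omega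
  simp only [hiff]
  split_ifs with h
  · simp only [← Matrix.transpose_pow, Matrix.transpose_apply, Finset.sum_mul, Finset.mul_sum]
    conv_lhs => rw [Finset.sum_comm]
    conv_lhs => enter [2, t]; rw [Finset.sum_comm]
    conv_lhs => rw [Finset.sum_comm]
    apply Finset.sum_congr rfl; intro u _
    apply Finset.sum_congr rfl; intro t _
    apply Finset.sum_congr rfl; intro x _
    ring
  · rfl

lemma triangle_sum {n m : ℕ} (k : ℕ) (g : ℕ → ℕ → Matrix (Fin n) (Fin m) ℝ) :
    ∑ i ∈ Finset.range k, ∑ j ∈ Finset.range (i + 1), g j (i - j)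
      = ∑ a ∈ Finset.range k, ∑ b ∈ Finset.range k,
          (if a + b < k then g a b else 0) := by
  have inner : ∀ a ∈ Finset.range k,
      (∑ b ∈ Finset.range k, if a + b < k then g a b else 0)
        = ∑ b ∈ Finset.range (k - a), g a b := by
    intro a ha
    rw [Finset.sum_ite, Finset.sum_const_zero, add_zero]
    congr 1
    ext b
    simp only [Finset.mem_filter, Finset.mem_range]
    omega
  rw [Finset.sum_congr rfl inner, Finset.sum_sigma', Finset.sum_sigma']
  refine Finset.sum_nbij' (i := fun x => (⟨x.2, x.1 - x.2⟩ : Σ _ : ℕ, ℕ))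
    (j := fun x => (⟨x.1 + x.2, x.1⟩ : Σ _ : ℕ, ℕ)) ?_ ?_ ?_ ?_ ?_
  · rintro ⟨i, j⟩ hm
    simp only [Finset.mem_sigma, Finset.mem_range] at hm ⊢
    omega
  · rintro ⟨a, b⟩ hm
    simp only [Finset.mem_sigma, Finset.mem_range] at hm ⊢
    omega
  · rintro ⟨i, j⟩ hm
    simp only [Finset.mem_sigma, Finset.mem_range] at hm
    show (⟨j + (i - j), j⟩ : Σ _ : ℕ, ℕ) = ⟨i, j⟩
    have h : j + (i - j) = i := by omega
    rw [h]
  · rintro ⟨a, b⟩ hm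
    simp only [Finset.mem_sigma, Finset.mem_range] at hm
    show (⟨a, a + b - a⟩ : Σ _ : ℕ, ℕ) = ⟨a, b⟩
    have h : a + b - a = b := by omega
    rw [h]
  · rintro ⟨i, j⟩ hm
    rfl

theorem stmt5 (n m s : ℕ) (A : Matrix (Fin n) (Fin n) ℝ) (B : Matrix (Fin m) (Fin m) ℝ)
    (C1 : Matrix (Fin n) (Fin s) ℝ) (C2 : Matrix (Fin m) (Fin s) ℝ) (k : ℕ)
    (Z : Matrix (Fin n) (Fin m) ℝ) (ρ : ℕ → ℝ)
    (hZ : _root_.vec Z = ∑ i ∈ Finset.range k, ρ i •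
      ((((1 : Matrix (Fin m) (Fin m) ℝ) ⊗ₖ A + Bᵀ ⊗ₖ (1 : Matrix (Fin n) (Fin n) ℝ)) ^ i) *ᵥ
        _root_.vec (C1 * C2ᵀ))) :
    Z = krylovMat A C1 k * Zhat k s ρ * (krylovMat Bᵀ C2 k)ᵀ := by
  have h1 : Z = ∑ i ∈ Finset.range k, ∑ j ∈ Finset.range (i + 1),
      ((((j + (i - j)).choose j : ℝ)) * ρ (j + (i - j))) •
        (A ^ j * (C1 * C2ᵀ) * B ^ (i - j)) := by
    apply _root_.vec_inj
    rw [hZ, _root_.vec_sum]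
    refine Finset.sum_congr rfl fun i hi => ?_
    rw [key, _root_.vec_sum, Finset.smul_sum, _root_.vec_sum]
    refine Finset.sum_congr rfl fun j hj => ?_
    simp only [Finset.mem_range] at hj
    have hji : j + (i - j) = i := by omega
    rw [hji]
    funext p
    simp [_root_.vec, Matrix.smul_apply, smul_eq_mul]
    ring
  rw [h1, rhs_eq]
  rw [Fin.sum_univ_eq_sum_range (fun a => ∑ b : Fin k,
    (if a + (b : ℕ) < k then (((a + (b : ℕ)).choose a : ℝ) * ρ (a + (b : ℕ))) else 0) •
      (A ^ a * (C1 * C2ᵀ) * B ^ (b : ℕ)))]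
  have h2 : ∀ a, (∑ b : Fin k,
      (if a + (b : ℕ) < k then (((a + (b : ℕ)).choose a : ℝ) * ρ (a + (b : ℕ))) else 0) •
        (A ^ a * (C1 * C2ᵀ) * B ^ (b : ℕ)))
      = ∑ b ∈ Finset.range k,
        (if a + b < k then (((a + b).choose a : ℝ) * ρ (a + b)) • (A ^ a * (C1 * C2ᵀ) * B ^ b)
         else 0) := by
    intro a
    rw [Fin.sum_univ_eq_sum_range (fun b =>
      (if a + b < k then (((a + b).choose a : ℝ) * ρ (a + b)) else 0) •
        (A ^ a * (C1 * C2ᵀ) * B ^ b))]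
    refine Finset.sum_congr rfl fun b _ => ?_
    rw [ite_smul, zero_smul]
  simp only [h2]
  exact triangle_sum k (fun a b => (((a + b).choose a : ℝ) * ρ (a + b)) • (A ^ a * (C1 * C2ᵀ) * B ^ b))
end
end

section
/- Let A ∈ ℝ^{n×n}, B ∈ ℝ^{m×m}, C1 ∈ ℝ^{n×s}, C2 ∈ ℝ^{m×s}, F := I_m ⊗ A + Bᵀ ⊗ I_n, and c := vec(C1 C2ᵀ). If Z ∈ ℝ^{n×m} satisfies vec(Z) ∈ K_k(F,c) := span(c, Fc, …, F^{k-1}c), then rank(Z) ≤ ks. -/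
open Matrix Kronecker

noncomputable section

namespace Stmt6Aux

variable {n m s : ℕ}

/-- span of columns of `A^i * C1` for `i < p`. -/
def V (A : Matrix (Fin n) (Fin n) ℝ) (C1 : Matrix (Fin n) (Fin s) ℝ) (p : ℕ) :
    Submodule ℝ (Fin n → ℝ) :=
  Submodule.span ℝ (Set.range fun q : Fin p × Fin s => (A ^ (q.1 : ℕ) * C1)ᵀ q.2)

lemma V_mono (A : Matrix (Fin n) (Fin n) ℝ) (C1 : Matrix (Fin n) (Fin s) ℝ)
    {p q : ℕ} (h : p ≤ q) : V A C1 p ≤ V A C1 q := by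
  apply Submodule.span_mono
  rintro _ ⟨⟨i, j⟩, rfl⟩
  exact ⟨(⟨i, lt_of_lt_of_le i.2 h⟩, j), rfl⟩

lemma finrank_V_le (A : Matrix (Fin n) (Fin n) ℝ) (C1 : Matrix (Fin n) (Fin s) ℝ) (p : ℕ) :
    Module.finrank ℝ (V A C1 p) ≤ p * s := by
  have := finrank_range_le_card (R := ℝ)
    (fun q : Fin p × Fin s => (A ^ (q.1 : ℕ) * C1)ᵀ q.2)
  exact this.trans (by simp)

/-- extract column `j` of the `vec`-encoded matrix -/
def vcol (j : Fin m) : (Fin m × Fin n → ℝ) →ₗ[ℝ] (Fin n → ℝ) :=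
  LinearMap.funLeft ℝ ℝ (fun i => (j, i))

lemma transpose_mul_apply (A : Matrix (Fin n) (Fin n) ℝ) (M : Matrix (Fin n) (Fin s) ℝ)
    (t : Fin s) : (A * M)ᵀ t = A *ᵥ (Mᵀ t) := by
  funext i
  simp [Matrix.mul_apply, Matrix.mulVec, dotProduct]

lemma mulVec_V_mem (A : Matrix (Fin n) (Fin n) ℝ) (C1 : Matrix (Fin n) (Fin s) ℝ)
    {p : ℕ} {x : Fin n → ℝ} (hx : x ∈ V A C1 p) : A *ᵥ x ∈ V A C1 (p + 1) := by
  have : Submodule.map A.mulVecLin (V A C1 p) ≤ V A C1 (p + 1) := by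
    rw [V, Submodule.map_span, Submodule.span_le]
    rintro _ ⟨_, ⟨⟨i, j⟩, rfl⟩, rfl⟩
    apply Submodule.subset_span
    refine ⟨(⟨(i : ℕ) + 1, by omega⟩, j), ?_⟩
    simp only [Matrix.mulVecLin_apply, ← transpose_mul_apply, ← Matrix.mul_assoc,
      ← pow_succ']
  exact this ⟨x, hx, rfl⟩

lemma col_mulVec (F : Matrix (Fin m × Fin n) (Fin m × Fin n) ℝ)
    (hF : F = (1 : Matrix (Fin m) (Fin m) ℝ) ⊗ₖ (A : Matrix (Fin n) (Fin n) ℝ)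
      + (B : Matrix (Fin m) (Fin m) ℝ)ᵀ ⊗ₖ (1 : Matrix (Fin n) (Fin n) ℝ))
    (x : Fin m × Fin n → ℝ) (j : Fin m) :
    vcol j (F *ᵥ x) = A *ᵥ (vcol j x) + ∑ j' : Fin m, B j' j • (vcol j' x) := by
  subst hF
  funext i
  simp only [vcol, LinearMap.funLeft_apply, Matrix.mulVec, dotProduct, Matrix.add_apply,
    Matrix.kroneckerMap_apply, Fintype.sum_prod_type, Matrix.one_apply, add_mul,
    Finset.sum_add_distrib, ite_mul, one_mul, zero_mul, mul_ite, mul_zero, mul_one,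
    Pi.add_apply, Finset.sum_apply, Pi.smul_apply, smul_eq_mul, Matrix.transpose_apply]
  congr 1
  · rw [Finset.sum_comm]
    simp [Finset.sum_ite_eq]
  · simp [Finset.sum_ite_eq]

end Stmt6Aux

open Stmt6Aux in
theorem stmt6 (n m s : ℕ) (A : Matrix (Fin n) (Fin n) ℝ) (B : Matrix (Fin m) (Fin m) ℝ)
    (C1 : Matrix (Fin n) (Fin s) ℝ) (C2 : Matrix (Fin m) (Fin s) ℝ) (k : ℕ)
    (Z : Matrix (Fin n) (Fin m) ℝ)
    (hZ : _root_.vec Z ∈ krylov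
      ((1 : Matrix (Fin m) (Fin m) ℝ) ⊗ₖ A + Bᵀ ⊗ₖ (1 : Matrix (Fin n) (Fin n) ℝ))
      (_root_.vec (C1 * C2ᵀ)) k) :
    Z.rank ≤ k * s := by
  set F := (1 : Matrix (Fin m) (Fin m) ℝ) ⊗ₖ A + Bᵀ ⊗ₖ (1 : Matrix (Fin n) (Fin n) ℝ) with hF
  set c := _root_.vec (C1 * C2ᵀ) with hc
  -- columns of F^p c lie in V A C1 (p+1)
  have key : ∀ p : ℕ, ∀ j : Fin m, vcol j ((F ^ p) *ᵥ c) ∈ V A C1 (p + 1) := by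
    intro p
    induction p with
    | zero =>
      intro j
      have hcol : vcol j c = C1 *ᵥ (fun t => C2 j t) := by
        funext i
        simp [vcol, hc, _root_.vec, Matrix.mul_apply, Matrix.mulVec, dotProduct, LinearMap.funLeft_apply]
      rw [pow_zero, Matrix.one_mulVec, hcol]
      have : C1 *ᵥ (fun t => C2 j t) ∈ Submodule.span ℝ (Set.range C1ᵀ) := by
        rw [show Set.range C1ᵀ = Set.range C1.col from rfl, ← Matrix.range_mulVecLin]
        exact ⟨_, rfl⟩
      refine Submodule.span_le.mpr ?_ this
      rintro _ ⟨t, rfl⟩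
      apply Submodule.subset_span
      exact ⟨(⟨0, by omega⟩, t), by simp⟩
    | succ p ih =>
      intro j
      have hpow : (F ^ (p + 1)) *ᵥ c = F *ᵥ ((F ^ p) *ᵥ c) := by
        rw [pow_succ', Matrix.mulVec_mulVec]
      rw [hpow, col_mulVec (A := A) (B := B) F hF]
      refine Submodule.add_mem _ (mulVec_V_mem A C1 (ih j)) ?_
      refine Submodule.sum_mem _ fun j' _ => Submodule.smul_mem _ _ ?_
      exact V_mono A C1 (by omega) (ih j')
  -- hence all columns of Z lie in V A C1 k
  have hcols : ∀ j : Fin m, Zᵀ j ∈ V A C1 k := by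
    intro j
    have hle : krylov F c k ≤ Submodule.comap (vcol (n := n) j) (V A C1 k) := by
      rw [krylov, Submodule.span_le]
      rintro _ ⟨i, rfl⟩
      exact V_mono A C1 (by omega : (i : ℕ) + 1 ≤ k) (key i j)
    have := hle hZ
    exact this
  have hrange : Submodule.span ℝ (Set.range Zᵀ) ≤ V A C1 k := by
    rw [Submodule.span_le]
    rintro _ ⟨j, rfl⟩
    exact hcols j
  calc Z.rank = Module.finrank ℝ (LinearMap.range Z.mulVecLin) := rfl
    _ = Module.finrank ℝ (Submodule.span ℝ (Set.range Zᵀ)) := by rw [Matrix.range_mulVecLin]; rfl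
    _ ≤ Module.finrank ℝ (V A C1 k) := Submodule.finrank_mono hrange
    _ ≤ k * s := finrank_V_le A C1 k
end
end

section
/- Let A ∈ ℝ^{n×n}, B ∈ ℝ^{m×m}. Suppose V_k ∈ ℝ^{n×ks}, V_{k+1} ∈ ℝ^{n×(k+1)s}, W_k ∈ ℝ^{m×ks}, W_{k+1} ∈ ℝ^{m×(k+1)s} are such that V_k consists of the first ks columns of V_{k+1}, W_k consists of the first ks columns of W_{k+1}, and the block Krylov (Arnoldi-type) relations A V_k = V_{k+1} H and Bᵀ W_k = W_{k+1} G hold for some H, G ∈ ℝ^{(k+1)s×ks}. Then for every X̂ ∈ ℝ^{ks×ks}, with X := V_k X̂ W_kᵀ, one has AX + XB = V_{k+1} · ( [H X̂, O_{(k+1)s,s}] + [X̂ Gᵀ ; O_{s,(k+1)s}] ) · W_{k+1}ᵀ, where [H X̂, O_{(k+1)s,s}] ∈ ℝ^{(k+1)s×(k+1)s} pads H X̂ on the right with s zero columns, and [X̂ Gᵀ ; O_{s,(k+1)s}] ∈ ℝ^{(k+1)s×(k+1)s} pads X̂ Gᵀ below with s zero rows. -/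
open Matrix

noncomputable section

theorem stmt10 (n m s k : ℕ) (A : Matrix (Fin n) (Fin n) ℝ) (B : Matrix (Fin m) (Fin m) ℝ)
    (Vk : Matrix (Fin n) (Fin (k * s)) ℝ) (Wk : Matrix (Fin m) (Fin (k * s)) ℝ)
    (Vk1 : Matrix (Fin n) (Fin (k * s) ⊕ Fin s) ℝ)
    (Wk1 : Matrix (Fin m) (Fin (k * s) ⊕ Fin s) ℝ)
    (hVfirst : ∀ i j, Vk i j = Vk1 i (Sum.inl j))
    (hWfirst : ∀ i j, Wk i j = Wk1 i (Sum.inl j))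
    (H G : Matrix (Fin (k * s) ⊕ Fin s) (Fin (k * s)) ℝ)
    (hAV : A * Vk = Vk1 * H) (hBW : Bᵀ * Wk = Wk1 * G)
    (Xh : Matrix (Fin (k * s)) (Fin (k * s)) ℝ) :
    A * (Vk * Xh * Wkᵀ) + (Vk * Xh * Wkᵀ) * B =
      Vk1 * (Matrix.fromCols (H * Xh) 0 + Matrix.fromRows (Xh * Gᵀ) 0) * Wk1ᵀ := by
  set E : Matrix (Fin (k * s) ⊕ Fin s) (Fin (k * s)) ℝ := Matrix.fromRows 1 0 with hEdef
  have hV : Vk = Vk1 * E := by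
    ext i j
    simp [hEdef, Matrix.mul_apply, Fintype.sum_sum_type, Matrix.one_apply,
      Finset.sum_ite_eq', hVfirst i j]
  have hW : Wk = Wk1 * E := by
    ext i j
    simp [hEdef, Matrix.mul_apply, Fintype.sum_sum_type, Matrix.one_apply,
      Finset.sum_ite_eq', hWfirst i j]
  have key : Matrix.fromCols (H * Xh) 0 + Matrix.fromRows (Xh * Gᵀ) 0
      = H * Xh * Eᵀ + E * (Xh * Gᵀ) := by
    rw [hEdef, Matrix.transpose_fromRows, Matrix.mul_fromCols, Matrix.fromRows_mul]
    simp
  have hWB : Wkᵀ * B = Gᵀ * Wk1ᵀ := by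
    have := congrArg Matrix.transpose hBW
    simpa [Matrix.transpose_mul] using this
  have h1 : A * (Vk * Xh * Wkᵀ) = Vk1 * (H * Xh * Eᵀ) * Wk1ᵀ := by
    calc A * (Vk * Xh * Wkᵀ) = (A * Vk) * Xh * Wkᵀ := by
          simp [Matrix.mul_assoc]
      _ = Vk1 * H * Xh * (Wk1 * E)ᵀ := by rw [hAV, hW]
      _ = Vk1 * (H * Xh * Eᵀ) * Wk1ᵀ := by
          rw [Matrix.transpose_mul]; simp [Matrix.mul_assoc]
  have h2 : (Vk * Xh * Wkᵀ) * B = Vk1 * (E * (Xh * Gᵀ)) * Wk1ᵀ := by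
    calc (Vk * Xh * Wkᵀ) * B = Vk * Xh * (Wkᵀ * B) := by simp [Matrix.mul_assoc]
      _ = (Vk1 * E) * Xh * (Gᵀ * Wk1ᵀ) := by rw [hWB, hV]
      _ = Vk1 * (E * (Xh * Gᵀ)) * Wk1ᵀ := by simp [Matrix.mul_assoc]
  rw [h1, h2, key, Matrix.mul_add, Matrix.add_mul]
end
end
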